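/- Let G be a digraph with a global sink, and let τ₀, τ₁, …, τₙ be a sequence of chip-and-rotor states on G, each of which is a successor of the one before. If τ₀, τ'₁, …, τ'ₘ is another such sequence and τₙ is stable, then m ≤ n. If in addition τ'ₘ is stable, then m = n, τₙ = τ'ₙ, and for each vertex w the number of times w fires is the same in both histories. -/

import Mathlib

/-!
Abelian property of the rotor-router model (Holroyd et al., Lemma 3.9): on a digraph
with a global sink, any two complete legal firing histories of chip-and-rotor states
agree in length, final state, and firing counts.
-/

/-- The vertices other than the (global) sink `s`; these are the non-sink vertices. -/
abbrev Vne {V : Type} (s : V) : Type := {v : V // v ≠ s}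

/-- Rotor configurations on the non-sink vertices. -/
abbrev RotorConfig {V E : Type} (tail : E → V) (s : V) : Type :=
  {ρ : Vne s → E // ∀ v, tail (ρ v) = v.1}

/-- A chip-and-rotor state: a chip configuration together with a rotor configuration. -/
abbrev CRState {V E : Type} (tail : E → V) (s : V) : Type :=
  (Vne s → ℕ) × RotorConfig tail s

/-- Firing the non-sink vertex `v` in a chip-and-rotor state: the rotor at `v` is
advanced to the next edge in the cyclic ordering of outgoing edges at `v`, and one
chip moves from `v` to the head of that edge (disappearing if the head is the sink). -/
def crFire {V E : Type} [DecidableEq V] {s : V} (tail head : E → V) (next : E → E)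
    (hnext : ∀ e, tail (next e) = tail e)
    (τ : CRState tail s) (v : Vne s) : CRState tail s :=
  (fun u => (τ.1 u - if u = v then 1 else 0) +
      if u.1 = head (next (τ.2.1 v)) then 1 else 0,
   ⟨Function.update τ.2.1 v (next (τ.2.1 v)), by
      intro u
      rcases eq_or_ne u v with h | h
      · rw [h, Function.update_self, hnext]
        exact τ.2.2 v
      · rw [Function.update_of_ne h]
        exact τ.2.2 u⟩)

/-- A non-sink vertex is active in a chip-and-rotor state when it holds a chip. -/
def crActive {V E : Type} {s : V} (tail : E → V) (τ : CRState tail s) (v : Vne s) : Prop :=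
  1 ≤ τ.1 v

/-- The result of firing the vertices in the list `l` in order. -/
def crFireList {V E : Type} [DecidableEq V] {s : V} (tail head : E → V) (next : E → E)
    (hnext : ∀ e, tail (next e) = tail e)
    (τ : CRState tail s) : List (Vne s) → CRState tail s
  | [] => τ
  | v :: l => crFireList tail head next hnext (crFire tail head next hnext τ v) l

/-- The firing sequence `l` is legal from `τ`: each fired vertex is active when fired,
so each state is a successor of the previous one. -/
def crLegal {V E : Type} [DecidableEq V] {s : V} (tail head : E → V) (next : E → E)
    (hnext : ∀ e, tail (next e) = tail e)
    (τ : CRState tail s) : List (Vne s) → Prop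
  | [] => True
  | v :: l => crActive tail τ v ∧ crLegal tail head next hnext (crFire tail head next hnext τ v) l

/-- A chip-and-rotor state is stable when no vertex can fire: all chips have reached
the sink and disappeared. -/
def crStable {V E : Type} {s : V} (tail : E → V) (τ : CRState tail s) : Prop :=
  ∀ v : Vne s, τ.1 v = 0

section Helpers

variable {V E : Type} [DecidableEq V] {s : V}
variable (tail head : E → V) (next : E → E) (hnext : ∀ e, tail (next e) = tail e)

lemma crFire_mono (τ : CRState tail s) (u v : Vne s) (h : v ≠ u) :
    τ.1 v ≤ (crFire tail head next hnext τ u).1 v := by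
  simp only [crFire, if_neg h]
  split <;> omega

lemma crFire_comm (τ : CRState tail s) (u v : Vne s) (huv : u ≠ v)
    (hu : 1 ≤ τ.1 u) (hv : 1 ≤ τ.1 v) :
    crFire tail head next hnext (crFire tail head next hnext τ u) v =
    crFire tail head next hnext (crFire tail head next hnext τ v) u := by
  refine Prod.ext ?_ (Subtype.ext ?_)
  · funext w
    simp only [crFire, Function.update_of_ne (Ne.symm huv), Function.update_of_ne huv]
    rcases eq_or_ne w u with rfl | hwu
    · simp only [if_pos rfl, if_neg huv]
      split_ifs <;> omega
    · rcases eq_or_ne w v with rfl | hwv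
      · simp only [if_pos rfl, if_neg (Ne.symm huv)]
        split_ifs <;> omega
      · simp only [if_neg hwu, if_neg hwv]
        split_ifs <;> omega
  · simp only [crFire, Function.update_of_ne (Ne.symm huv), Function.update_of_ne huv]
    exact Function.update_comm huv _ _ _

lemma crActive_of_not_mem (τ : CRState tail s) (l : List (Vne s)) (v : Vne s)
    (hv : 1 ≤ τ.1 v) (hl : crLegal tail head next hnext τ l) (hnm : v ∉ l) :
    1 ≤ (crFireList tail head next hnext τ l).1 v := by
  induction l generalizing τ with
  | nil => exact hv
  | cons u l ih =>
    have hne : v ≠ u := fun h => hnm (h ▸ List.mem_cons_self)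
    exact ih _ (le_trans hv (crFire_mono tail head next hnext τ u v hne)) hl.2
      (fun h => hnm (List.mem_cons_of_mem _ h))

lemma crSwap (τ : CRState tail s) (v : Vne s) (a b : List (Vne s))
    (hv : 1 ≤ τ.1 v) (hva : v ∉ a)
    (hl : crLegal tail head next hnext τ (a ++ v :: b)) :
    crLegal tail head next hnext τ (v :: (a ++ b)) ∧
      crFireList tail head next hnext τ (v :: (a ++ b)) =
        crFireList tail head next hnext τ (a ++ v :: b) := by
  induction a generalizing τ with
  | nil => exact ⟨hl, rfl⟩
  | cons u a ih =>
    obtain ⟨hu, hl2⟩ := hl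
    have hvu : v ≠ u := fun h => hva (h ▸ List.mem_cons_self)
    have hv' : 1 ≤ (crFire tail head next hnext τ u).1 v :=
      le_trans hv (crFire_mono tail head next hnext τ u v hvu)
    obtain ⟨ihl, ihe⟩ := ih (crFire tail head next hnext τ u) hv'
      (fun h => hva (List.mem_cons_of_mem _ h)) hl2
    have hcomm := crFire_comm tail head next hnext τ u v (Ne.symm hvu) hu hv
    refine ⟨⟨hv, ?_, ?_⟩, ?_⟩
    · exact le_trans hu (crFire_mono tail head next hnext τ v u (Ne.symm hvu))
    · have := ihl.2
      show crLegal tail head next hnext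
        (crFire tail head next hnext (crFire tail head next hnext τ v) u) (a ++ b)
      rw [← hcomm]
      exact this
    · show crFireList tail head next hnext
        (crFire tail head next hnext (crFire tail head next hnext τ v) u) (a ++ b) =
          crFireList tail head next hnext (crFire tail head next hnext τ u) (a ++ v :: b)
      rw [← hcomm]
      exact ihe

lemma crMemSplitFirst {α : Type} {v : α} {l : List α} (h : v ∈ l) :
    ∃ a b, l = a ++ v :: b ∧ v ∉ a := by
  induction l with
  | nil => cases h
  | cons u l ih =>
    by_cases hvu : v = u
    · exact ⟨[], l, by simp [hvu], List.not_mem_nil⟩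
    · obtain ⟨a, b, rfl, hva⟩ := ih ((List.mem_cons.1 h).resolve_left hvu)
      exact ⟨u :: a, b, rfl, by simp [hvu, hva]⟩

lemma crCore (l' : List (Vne s)) (τ : CRState tail s) (l : List (Vne s))
    (hl : crLegal tail head next hnext τ l)
    (hst : crStable tail (crFireList tail head next hnext τ l))
    (hl' : crLegal tail head next hnext τ l') :
    l'.length ≤ l.length ∧ ∀ w, l'.count w ≤ l.count w := by
  induction l' generalizing τ l with
  | nil => exact ⟨Nat.zero_le _, fun w => Nat.zero_le _⟩
  | cons v t ih =>
    obtain ⟨hv, ht⟩ := hl'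
    have hvmem : v ∈ l := by
      by_contra hnm
      have h1 := crActive_of_not_mem tail head next hnext τ l v hv hl hnm
      have h2 := hst v
      omega
    obtain ⟨a, b, rfl, hva⟩ := crMemSplitFirst hvmem
    obtain ⟨hsl, hse⟩ := crSwap tail head next hnext τ v a b hv hva hl
    have hst' : crStable tail
        (crFireList tail head next hnext (crFire tail head next hnext τ v) (a ++ b)) := by
      have : crFireList tail head next hnext (crFire tail head next hnext τ v) (a ++ b) =
          crFireList tail head next hnext τ (a ++ v :: b) := hse
      rw [this]
      exact hst
    obtain ⟨h1, h2⟩ := ih _ _ hsl.2 hst' ht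
    constructor
    · simp only [List.length_cons, List.length_append] at h1 ⊢
      omega
    · intro w
      have hw := h2 w
      simp only [List.count_cons, List.count_append] at hw ⊢
      split_ifs <;> omega

lemma crRotorFormula (τ : CRState tail s) (l : List (Vne s)) (u : Vne s) :
    (crFireList tail head next hnext τ l).2.1 u = next^[l.count u] (τ.2.1 u) := by
  induction l generalizing τ with
  | nil => rfl
  | cons v l ih =>
    show (crFireList tail head next hnext (crFire tail head next hnext τ v) l).2.1 u = _
    rw [ih, List.count_cons]
    rcases eq_or_ne u v with rfl | h
    · simp [crFire, Function.iterate_succ_apply]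
    · simp [crFire, Function.update_of_ne h, if_neg (Subtype.coe_injective.ne (Ne.symm h))]

end Helpers

/-- **Abelian property of rotor-routing.**  Let `G` be a digraph with global sink `s`.
If `l` is a legal firing sequence from the chip-and-rotor state `τ₀` ending in a
stable state, and `l'` is any legal firing sequence from `τ₀`, then `l'` is no longer
than `l`; if moreover `l'` also ends in a stable state, then the two sequences have
the same length, the same final state, and each vertex fires the same number of times
in both histories. -/
theorem rotor_routing_abelian_property
    {V E : Type} [Fintype V] [DecidableEq V] [Fintype E]
    (tail head : E → V) (next : E → E)
    (hnext : ∀ e, tail (next e) = tail e)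
    (hcyc : ∀ e e' : E, tail e = tail e' → ∃ k, next^[k] e = e')
    (s : V) (hs : ∀ e : E, tail e ≠ s)
    (hglobal : ∀ v : V,
      Relation.ReflTransGen (fun a b => ∃ e, tail e = a ∧ head e = b) v s)
    (τ₀ : CRState tail s)
    (l l' : List (Vne s))
    (hl : crLegal tail head next hnext τ₀ l) (hl' : crLegal tail head next hnext τ₀ l')
    (hstable : crStable tail (crFireList tail head next hnext τ₀ l)) :
    l'.length ≤ l.length ∧
      (crStable tail (crFireList tail head next hnext τ₀ l') →
        l'.length = l.length ∧
        crFireList tail head next hnext τ₀ l' = crFireList tail head next hnext τ₀ l ∧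
        ∀ v, l'.count v = l.count v) := by
  obtain ⟨h1, h2⟩ := crCore tail head next hnext l' τ₀ l hl hstable hl'
  refine ⟨h1, fun hst' => ?_⟩
  obtain ⟨h1', h2'⟩ := crCore tail head next hnext l τ₀ l' hl' hst' hl
  have hcount : ∀ w, l'.count w = l.count w := fun w => le_antisymm (h2 w) (h2' w)
  refine ⟨le_antisymm h1 h1', ?_, hcount⟩
  refine Prod.ext ?_ (Subtype.ext ?_)
  · funext w
    rw [hst' w, hstable w]
  · funext u
    rw [crRotorFormula, crRotorFormula, hcount u]
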